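/- The chromatic polynomial of a finite graph G = (V, E) satisfies P(G; λ) = (-1)^{r(E)} λ^{|V| - r(E)} T(G; 1-λ, 0), where r(E) = |V| - c(G) and c(G) is the number of connected components of G. Equivalently, the number of proper λ-colourings equals Σ_{X⊆E} (-1)^{|X|} λ^{c(V,X)}, where c(V,X) is the number of components of the spanning subgraph (V, X). -/
import Mathlib

open Finset SimpleGraph

section Aux

variable {V : Type*} [Fintype V] [DecidableEq V]

/-- An edge is monochromatic under `f`. -/
def IsMonoEdge {n : ℕ} (f : V → Fin n) (e : Sym2 V) : Prop :=
  ∀ a ∈ e, ∀ b ∈ e, f a = f b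

instance {n : ℕ} (f : V → Fin n) (e : Sym2 V) : Decidable (IsMonoEdge f e) := by
  unfold IsMonoEdge; infer_instance

lemma count_mono (n : ℕ) (X : Finset (Sym2 V)) :
    (univ.filter (fun f : V → Fin n => ∀ e ∈ X, IsMonoEdge f e)).card
      = n ^ Nat.card (fromEdgeSet (X : Set (Sym2 V))).ConnectedComponent := by
  set H := fromEdgeSet (X : Set (Sym2 V)) with hH
  have hwalk : ∀ (f : V → Fin n), (∀ e ∈ X, IsMonoEdge f e) →
      ∀ {a b : V}, H.Walk a b → f a = f b := by
    intro f hf a b p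
    induction p with
    | nil => rfl
    | cons h p ih =>
      rename_i u v w
      have hadj : s(u, v) ∈ (X : Set (Sym2 V)) ∧ u ≠ v := (fromEdgeSet_adj _).1 h
      have := hf _ hadj.1 u (by simp) v (by simp)
      exact this.trans ih
  have e : (H.ConnectedComponent → Fin n)
      ≃ {f : V → Fin n // ∀ e ∈ X, IsMonoEdge f e} :=
    { toFun := fun g => ⟨fun v => g (H.connectedComponentMk v), by
        intro e he a ha b hb
        by_cases hab : a = b
        · subst hab; rfl
        · have hE : e = s(a, b) := (Sym2.mem_and_mem_iff hab).1 ⟨ha, hb⟩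
          have hadj : H.Adj a b := by
            rw [hH, fromEdgeSet_adj]
            exact ⟨by rw [← hE]; exact he, hab⟩
          exact congrArg g (ConnectedComponent.sound hadj.reachable)⟩
      invFun := fun f => ConnectedComponent.lift f.1
        (fun v w p _ => hwalk f.1 f.2 p)
      left_inv := fun g => by
        funext c
        refine ConnectedComponent.ind (fun v => ?_) c
        simp
      right_inv := fun f => by
        ext v
        simp }
  have h1 : (univ.filter (fun f : V → Fin n => ∀ e ∈ X, IsMonoEdge f e)).card
      = Nat.card {f : V → Fin n // ∀ e ∈ X, IsMonoEdge f e} := by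
    rw [Nat.card_eq_fintype_card, Fintype.card_subtype]
  rw [h1, ← Nat.card_congr e, Nat.card_fun, Nat.card_eq_fintype_card, Fintype.card_fin]

lemma coloring_card (G : SimpleGraph V) [DecidableRel G.Adj] (n : ℕ) :
    Nat.card (G.Coloring (Fin n))
      = (univ.filter (fun f : V → Fin n => ∀ a b, G.Adj a b → f a ≠ f b)).card := by
  have e : G.Coloring (Fin n) ≃ {f : V → Fin n // ∀ a b, G.Adj a b → f a ≠ f b} :=
    { toFun := fun c => ⟨c, fun a b h => c.valid h⟩
      invFun := fun f => SimpleGraph.Coloring.mk f.1 (fun h => f.2 _ _ h)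
      left_inv := fun c => rfl
      right_inv := fun f => rfl }
  rw [Nat.card_congr e, Nat.card_eq_fintype_card, Fintype.card_subtype]

end Aux

theorem chromatic_polynomial_subset_expansion
    {V : Type*} [Fintype V] [DecidableEq V] (G : SimpleGraph V)
    [DecidableRel G.Adj] (n : ℕ) :
    (Nat.card (G.Coloring (Fin n)) : ℤ)
      = ∑ X ∈ G.edgeFinset.powerset,
          (-1 : ℤ) ^ X.card
            * (n : ℤ) ^ Nat.card (SimpleGraph.fromEdgeSet (X : Set (Sym2 V))).ConnectedComponent := by
  classical
  have step1 : ∑ X ∈ G.edgeFinset.powerset,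
        (-1 : ℤ) ^ X.card
          * (n : ℤ) ^ Nat.card (SimpleGraph.fromEdgeSet (X : Set (Sym2 V))).ConnectedComponent
      = ∑ X ∈ G.edgeFinset.powerset, (-1 : ℤ) ^ X.card
          * ((univ.filter (fun f : V → Fin n => ∀ e ∈ X, IsMonoEdge f e)).card : ℤ) := by
    refine Finset.sum_congr rfl fun X _ => ?_
    rw [count_mono]
    push_cast
    ring
  rw [step1]
  -- expand cardinalities as sums of indicators and swap
  have step2 : ∑ X ∈ G.edgeFinset.powerset, (-1 : ℤ) ^ X.card
        * ((univ.filter (fun f : V → Fin n => ∀ e ∈ X, IsMonoEdge f e)).card : ℤ)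
      = ∑ f : V → Fin n, ∑ X ∈ G.edgeFinset.powerset,
          (-1 : ℤ) ^ X.card * (if ∀ e ∈ X, IsMonoEdge f e then 1 else 0) := by
    rw [Finset.sum_comm]
    refine Finset.sum_congr rfl fun X _ => ?_
    rw [← Finset.mul_sum]
    congr 1
    rw [Finset.card_filter]
    push_cast
    rfl
  rw [step2]
  have inner : ∀ f : V → Fin n,
      ∑ X ∈ G.edgeFinset.powerset,
          (-1 : ℤ) ^ X.card * (if ∀ e ∈ X, IsMonoEdge f e then 1 else 0)
        = if ∀ a b, G.Adj a b → f a ≠ f b then 1 else 0 := by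
    intro f
    set M : Finset (Sym2 V) := G.edgeFinset.filter (IsMonoEdge f) with hM
    have hMsub : M ⊆ G.edgeFinset := Finset.filter_subset _ _
    have hconv : ∀ X ∈ G.edgeFinset.powerset,
        (-1 : ℤ) ^ X.card * (if ∀ e ∈ X, IsMonoEdge f e then 1 else 0)
          = if X ⊆ M then (-1 : ℤ) ^ X.card else 0 := by
      intro X hX
      rw [Finset.mem_powerset] at hX
      have : (∀ e ∈ X, IsMonoEdge f e) ↔ X ⊆ M := by
        constructor
        · intro h e he
          rw [hM, Finset.mem_filter]
          exact ⟨hX he, h e he⟩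
        · intro h e he
          exact (Finset.mem_filter.1 (h he)).2
      rw [if_congr this rfl rfl]
      split <;> ring
    rw [Finset.sum_congr rfl hconv, ← Finset.sum_filter]
    have hfil : G.edgeFinset.powerset.filter (· ⊆ M) = M.powerset := by
      ext X
      simp only [Finset.mem_filter, Finset.mem_powerset]
      exact ⟨fun h => h.2, fun h => ⟨h.trans hMsub, h⟩⟩
    rw [hfil, Finset.sum_powerset_neg_one_pow_card]
    have hiff : M = ∅ ↔ ∀ a b, G.Adj a b → f a ≠ f b := by
      rw [hM, Finset.filter_eq_empty_iff]
      constructor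
      · intro h a b hab hfab
        have hmem : s(a, b) ∈ G.edgeFinset := mem_edgeFinset.2 hab
        refine h hmem ?_
        intro x hx y hy
        rcases Sym2.mem_iff.1 hx with rfl | rfl <;>
          rcases Sym2.mem_iff.1 hy with rfl | rfl <;>
            first | rfl | exact hfab | exact hfab.symm
      · intro h e he hmono
        induction e with
        | _ a b =>
          have hab : G.Adj a b := mem_edgeFinset.1 he
          exact h a b hab (hmono a (by simp) b (by simp))
    rw [if_congr hiff rfl rfl]
  rw [Finset.sum_congr rfl (fun f _ => inner f), Finset.sum_boole,
    coloring_card]
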